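/- For every real γ > 0, (1/(4γ⁴)) · ∫₀^∞ ∫₀^{x₂} (exp(−x₁) + exp(−x₂)) · x₁ · x₂ · exp(−x₂²/(4γ²)) dx₁ dx₂ = 2 + γ² − γ·(5 + 2γ²)·W(γ). -/

import Mathlib

open MeasureTheory Real Topology

/-- `W x = exp (x²) · ∫_x^∞ exp (−t²) dt`, i.e. `(√π/2)·erfcx x`. -/
noncomputable def W (x : ℝ) : ℝ := Real.exp (x ^ 2) * ∫ t in Set.Ioi x, Real.exp (-(t ^ 2))

namespace MarginalAux

open Set Filter

noncomputable def E (u : ℝ) : ℝ := ∫ t in Set.Ioi u, Real.exp (-(t ^ 2))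

lemma contf : Continuous (fun t : ℝ => Real.exp (-(t ^ 2))) :=
  Real.continuous_exp.comp (continuous_pow 2).neg

lemma intE : Integrable (fun t : ℝ => Real.exp (-(t ^ 2))) := by
  have := integrable_exp_neg_mul_sq (b := (1:ℝ)) one_pos
  simpa using this

lemma E_eq (u : ℝ) : E u = E 0 - ∫ t in (0:ℝ)..u, Real.exp (-(t ^ 2)) := by
  have h := intervalIntegral.integral_Iic_sub_Iic (μ := volume)
    (f := fun t : ℝ => Real.exp (-(t ^ 2))) intE.integrableOn intE.integrableOn (a := 0) (b := u)
  have htot : ∀ v : ℝ, (∫ t in Iic v, Real.exp (-(t ^ 2))) + E v = ∫ t, Real.exp (-(t ^ 2)) := by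
    intro v
    exact intervalIntegral.integral_Iic_add_Ioi intE.integrableOn intE.integrableOn
  have h0 := htot 0
  have hu := htot u
  unfold E at *
  linarith [h]

lemma hasDerivAt_E (u : ℝ) : HasDerivAt E (-(Real.exp (-(u ^ 2)))) u := by
  rw [show E = fun v => E 0 - ∫ t in (0:ℝ)..v, Real.exp (-(t ^ 2)) from funext E_eq]
  have h : HasDerivAt (fun v : ℝ => ∫ t in (0:ℝ)..v, Real.exp (-(t ^ 2)))
      (Real.exp (-(u ^ 2))) u :=
    intervalIntegral.integral_hasDerivAt_right (intE.intervalIntegrable)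
      (contf.stronglyMeasurable.stronglyMeasurableAtFilter) contf.continuousAt
  simpa using h.const_sub (E 0)

lemma E_tendsto : Tendsto E atTop (𝓝 0) := by
  rw [show E = fun v => E 0 - ∫ t in (0:ℝ)..v, Real.exp (-(t ^ 2)) from funext E_eq]
  have h := MeasureTheory.intervalIntegral_tendsto_integral_Ioi (0:ℝ)
    (f := fun t : ℝ => Real.exp (-(t ^ 2))) intE.integrableOn tendsto_id
  have := (tendsto_const_nhds (x := E 0) (f := atTop)).sub h
  simpa [E] using this

end MarginalAux

open MarginalAux Set Filter

theorem marginal_terms_second_order (γ : ℝ) (hγ : 0 < γ) :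
    (1 / (4 * γ ^ 4)) *
      ∫ x₂ in Set.Ioi (0 : ℝ),
        ∫ x₁ in (0 : ℝ)..x₂,
          (Real.exp (-x₁) + Real.exp (-x₂)) * x₁ * x₂ * Real.exp (-(x₂ ^ 2) / (4 * γ ^ 2))
      = 2 + γ ^ 2 - γ * (5 + 2 * γ ^ 2) * W γ := by
  have hγ2 : (4 * γ ^ 2) ≠ 0 := by positivity
  have hγ' : γ ≠ 0 := hγ.ne'
  set g : ℝ → ℝ := fun s =>
    (1 - Real.exp (-s) * (1 + s) + Real.exp (-s) * s ^ 2 / 2) *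
      (s * Real.exp (-(s ^ 2) / (4 * γ ^ 2))) with hg
  -- inner integral
  have hinner : ∀ x₂ : ℝ,
      (∫ x₁ in (0:ℝ)..x₂,
        (Real.exp (-x₁) + Real.exp (-x₂)) * x₁ * x₂ * Real.exp (-(x₂ ^ 2) / (4 * γ ^ 2)))
      = g x₂ := by
    intro s
    have h1 : (∫ x in (0:ℝ)..s, (Real.exp (-x) + Real.exp (-s)) * x)
        = 1 - Real.exp (-s) * (1 + s) + Real.exp (-s) * s ^ 2 / 2 := by
      have hd : ∀ x ∈ Set.uIcc (0:ℝ) s,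
          HasDerivAt (fun y => -(Real.exp (-y) * (1 + y)) + Real.exp (-s) * y ^ 2 / 2)
            ((Real.exp (-x) + Real.exp (-s)) * x) x := by
        intro x _
        have h2 : HasDerivAt (fun y : ℝ => Real.exp (-y)) (Real.exp (-x) * (-1)) x :=
          (hasDerivAt_neg x).exp
        have h3 : HasDerivAt (fun y : ℝ => (1:ℝ) + y) 1 x := (hasDerivAt_id x).const_add 1
        have h4 : HasDerivAt (fun y : ℝ => y ^ 2) ((2:ℕ) * x ^ 1) x := hasDerivAt_pow 2 x
        have h5 := ((h2.mul h3).neg).add (((h4.const_mul (Real.exp (-s)))).div_const 2)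
        refine h5.congr_deriv ?_
        push_cast
        ring
      have hcont : IntervalIntegrable (fun x => (Real.exp (-x) + Real.exp (-s)) * x)
          volume 0 s := by
        apply Continuous.intervalIntegrable
        fun_prop
      rw [intervalIntegral.integral_eq_sub_of_hasDerivAt hd hcont]
      simp [Real.exp_zero]
      ring
    have hsplit : ∀ x : ℝ,
        (Real.exp (-x) + Real.exp (-s)) * x * s * Real.exp (-(s ^ 2) / (4 * γ ^ 2))
        = ((Real.exp (-x) + Real.exp (-s)) * x) * (s * Real.exp (-(s ^ 2) / (4 * γ ^ 2))) := by
      intro x; ring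
    simp_rw [hsplit]
    rw [intervalIntegral.integral_mul_const, h1, hg]
  -- the antiderivative
  set G : ℝ → ℝ := fun s =>
    -(2 * γ ^ 2) * Real.exp (-(s ^ 2) / (4 * γ ^ 2))
    + (-(γ ^ 2) * s ^ 2 + (2 * γ ^ 4 + 2 * γ ^ 2) * s + (2 * γ ^ 2 - 8 * γ ^ 4 - 4 * γ ^ 6)) *
        (Real.exp (-s) * Real.exp (-(s ^ 2) / (4 * γ ^ 2)))
    + Real.exp (γ ^ 2) * (20 * γ ^ 5 + 8 * γ ^ 7) * E ((s + 2 * γ ^ 2) / (2 * γ)) with hGdef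
  have hu2 : ∀ s : ℝ, Real.exp (-(((s + 2 * γ ^ 2) / (2 * γ)) ^ 2))
      = (Real.exp (γ ^ 2))⁻¹ * (Real.exp (-s) * Real.exp (-(s ^ 2) / (4 * γ ^ 2))) := by
    intro s
    rw [← Real.exp_neg, ← Real.exp_add, ← Real.exp_add]
    congr 1
    field_simp
    ring
  have hderiv : ∀ s : ℝ, HasDerivAt G (g s) s := by
    intro s
    have hX : HasDerivAt (fun y : ℝ => Real.exp (-(y ^ 2) / (4 * γ ^ 2)))
        (Real.exp (-(s ^ 2) / (4 * γ ^ 2)) * (-((2:ℕ) * s ^ 1) / (4 * γ ^ 2))) s :=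
      (((hasDerivAt_pow 2 s).neg).div_const (4 * γ ^ 2)).exp
    have hY : HasDerivAt (fun y : ℝ => Real.exp (-y)) (Real.exp (-s) * (-1)) s :=
      (hasDerivAt_neg s).exp
    have hP : HasDerivAt (fun y : ℝ =>
        -(γ ^ 2) * y ^ 2 + (2 * γ ^ 4 + 2 * γ ^ 2) * y + (2 * γ ^ 2 - 8 * γ ^ 4 - 4 * γ ^ 6))
        (-(γ ^ 2) * ((2:ℕ) * s ^ 1) + (2 * γ ^ 4 + 2 * γ ^ 2)) s := by
      have := (((hasDerivAt_pow 2 s).const_mul (-(γ ^ 2))).add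
        ((hasDerivAt_id s).const_mul (2 * γ ^ 4 + 2 * γ ^ 2))).add_const
        (2 * γ ^ 2 - 8 * γ ^ 4 - 4 * γ ^ 6)
      simpa [mul_comm] using this
    have hu : HasDerivAt (fun y : ℝ => (y + 2 * γ ^ 2) / (2 * γ)) (1 / (2 * γ)) s := by
      simpa using ((hasDerivAt_id s).add_const (2 * γ ^ 2)).div_const (2 * γ)
    have hE' : HasDerivAt (fun y : ℝ => E ((y + 2 * γ ^ 2) / (2 * γ)))
        (-(Real.exp (-(((s + 2 * γ ^ 2) / (2 * γ)) ^ 2))) * (1 / (2 * γ))) s :=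
      by have := (hasDerivAt_E ((s + 2 * γ ^ 2) / (2 * γ))).comp s hu; exact this
    have hG := ((hX.const_mul (-(2 * γ ^ 2))).add (hP.mul (hY.mul hX))).add
      (hE'.const_mul (Real.exp (γ ^ 2) * (20 * γ ^ 5 + 8 * γ ^ 7)))
    refine hG.congr_deriv ?_
    simp only [Pi.mul_apply]
    rw [hu2 s, hg]
    have hexp : Real.exp (γ ^ 2) ≠ 0 := (Real.exp_pos _).ne'
    push_cast
    field_simp
    ring
  -- limit of G at infinity
  have hXlim : Tendsto (fun s : ℝ => Real.exp (-(s ^ 2) / (4 * γ ^ 2))) atTop (𝓝 0) := by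
    apply Real.tendsto_exp_atBot.comp
    have h1 : Tendsto (fun s : ℝ => -(s ^ 2)) atTop atBot :=
      tendsto_neg_atTop_atBot.comp (tendsto_pow_atTop two_ne_zero)
    exact h1.atBot_div_const (by positivity)
  have hGlim : Tendsto G atTop (𝓝 0) := by
    have t1 : Tendsto (fun s : ℝ => -(2 * γ ^ 2) * Real.exp (-(s ^ 2) / (4 * γ ^ 2)))
        atTop (𝓝 0) := by
      simpa using hXlim.const_mul (-(2 * γ ^ 2))
    have hpoly : Tendsto (fun s : ℝ =>
        (-(γ ^ 2) * s ^ 2 + (2 * γ ^ 4 + 2 * γ ^ 2) * s + (2 * γ ^ 2 - 8 * γ ^ 4 - 4 * γ ^ 6)) *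
          Real.exp (-s)) atTop (𝓝 0) := by
      have e2 := (Real.tendsto_pow_mul_exp_neg_atTop_nhds_zero 2).const_mul (-(γ ^ 2))
      have e1 := (Real.tendsto_pow_mul_exp_neg_atTop_nhds_zero 1).const_mul
        (2 * γ ^ 4 + 2 * γ ^ 2)
      have e0 := (Real.tendsto_pow_mul_exp_neg_atTop_nhds_zero 0).const_mul
        (2 * γ ^ 2 - 8 * γ ^ 4 - 4 * γ ^ 6)
      have := (e2.add e1).add e0
      simp only [mul_zero, add_zero] at this
      refine this.congr fun s => ?_
      ring
    have t2 : Tendsto (fun s : ℝ =>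
        (-(γ ^ 2) * s ^ 2 + (2 * γ ^ 4 + 2 * γ ^ 2) * s + (2 * γ ^ 2 - 8 * γ ^ 4 - 4 * γ ^ 6)) *
          (Real.exp (-s) * Real.exp (-(s ^ 2) / (4 * γ ^ 2)))) atTop (𝓝 0) := by
      have := hpoly.mul hXlim
      simp only [zero_mul] at this
      refine this.congr fun s => ?_
      ring
    have t3 : Tendsto (fun s : ℝ =>
        Real.exp (γ ^ 2) * (20 * γ ^ 5 + 8 * γ ^ 7) * E ((s + 2 * γ ^ 2) / (2 * γ)))
        atTop (𝓝 0) := by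
      have hu : Tendsto (fun s : ℝ => (s + 2 * γ ^ 2) / (2 * γ)) atTop atTop :=
        (tendsto_atTop_add_const_right atTop (2 * γ ^ 2) tendsto_id).atTop_div_const
          (by positivity)
      have := (E_tendsto.comp hu).const_mul (Real.exp (γ ^ 2) * (20 * γ ^ 5 + 8 * γ ^ 7))
      simpa [Function.comp] using this
    have := (t1.add t2).add t3
    rw [hGdef]
    simpa using this
  -- integrability of g on Ioi 0
  have hpow : ∀ n : ℕ, IntegrableOn (fun s : ℝ => s ^ n * Real.exp (-(s ^ 2) / (4 * γ ^ 2)))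
      (Ioi 0) volume := by
    intro n
    have hb : (0:ℝ) < 1 / (4 * γ ^ 2) := by positivity
    have h := integrableOn_rpow_mul_exp_neg_mul_sq hb
      (s := (n : ℝ)) (lt_of_lt_of_le (by norm_num) (Nat.cast_nonneg n))
    refine h.congr_fun (fun x hx => ?_) measurableSet_Ioi
    simp only [Real.rpow_natCast]
    congr 1
    field_simp
  have hgi : IntegrableOn g (Ioi 0) volume := by
    have hB : IntegrableOn (fun s : ℝ =>
        2 * (s ^ 1 * Real.exp (-(s ^ 2) / (4 * γ ^ 2)))
        + s ^ 2 * Real.exp (-(s ^ 2) / (4 * γ ^ 2))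
        + s ^ 3 * Real.exp (-(s ^ 2) / (4 * γ ^ 2)) / 2) (Ioi 0) volume := by
      exact (((hpow 1).const_mul 2).add (hpow 2)).add ((hpow 3).div_const 2)
    refine Integrable.mono' hB ?_ ?_
    · exact (Continuous.aestronglyMeasurable (by fun_prop)).restrict
    · rw [ae_restrict_iff' measurableSet_Ioi]
      refine Eventually.of_forall fun s hs => ?_
      have hs0 : (0:ℝ) < s := hs
      have he1 : Real.exp (-s) ≤ 1 := Real.exp_le_one_iff.2 (by linarith)
      have he0 : (0:ℝ) < Real.exp (-s) := Real.exp_pos _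
      have hX0 : (0:ℝ) < Real.exp (-(s ^ 2) / (4 * γ ^ 2)) := Real.exp_pos _
      rw [hg, Real.norm_eq_abs, abs_mul]
      have h2 : |s * Real.exp (-(s ^ 2) / (4 * γ ^ 2))|
          = s * Real.exp (-(s ^ 2) / (4 * γ ^ 2)) := abs_of_pos (by positivity)
      rw [h2]
      have h3 : |1 - Real.exp (-s) * (1 + s) + Real.exp (-s) * s ^ 2 / 2|
          ≤ 2 + s + s ^ 2 / 2 := by
        rw [abs_le]
        constructor <;> nlinarith
      calc |1 - Real.exp (-s) * (1 + s) + Real.exp (-s) * s ^ 2 / 2| *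
            (s * Real.exp (-(s ^ 2) / (4 * γ ^ 2)))
          ≤ (2 + s + s ^ 2 / 2) * (s * Real.exp (-(s ^ 2) / (4 * γ ^ 2))) := by
            apply mul_le_mul_of_nonneg_right h3 (by positivity)
        _ = 2 * (s ^ 1 * Real.exp (-(s ^ 2) / (4 * γ ^ 2)))
            + s ^ 2 * Real.exp (-(s ^ 2) / (4 * γ ^ 2))
            + s ^ 3 * Real.exp (-(s ^ 2) / (4 * γ ^ 2)) / 2 := by ring
  -- evaluate the outer integral
  have houter : ∫ s in Ioi (0:ℝ), g s = 0 - G 0 :=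
    MeasureTheory.integral_Ioi_of_hasDerivAt_of_tendsto'
      (fun x _ => hderiv x) hgi hGlim
  have hG0 : G 0 = -(8 * γ ^ 4 + 4 * γ ^ 6) + (20 * γ ^ 5 + 8 * γ ^ 7) * W γ := by
    have harg : ((0:ℝ) + 2 * γ ^ 2) / (2 * γ) = γ := by
      field_simp
      ring
    have hW : W γ = Real.exp (γ ^ 2) * E γ := rfl
    rw [hGdef]
    simp only [harg]
    rw [hW]
    norm_num [Real.exp_zero]
    ring
  simp_rw [hinner]
  rw [houter, hG0]
  have hWγ := W γ
  field_simp
  ring
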